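/- The dual lattice of A = Γ ⊗ Γ' with respect to ⟨⟨·,·⟩⟩ is A* = Γ ⊗ (O_E + P_E^{−1}·δ), i.e. A* consists of the O_E-span of the elements v ⊗ (c + p^{−1}d·δ) with v ∈ Γ and c, d ∈ O_E. Moreover A is a non-self-dual "good" lattice: p·A* ⊆ A and A ⊊ A*. -/

import Mathlib

noncomputable section
open Matrix

/-- The image of `p` in `E`. -/
def pE (p : ℕ) [Fact p.Prime] (E : Type) [Field E] [Algebra ℚ_[p] E] : E :=
  algebraMap ℚ_[p] E (p : ℚ_[p])

/-- The ring of integers `O_E = ℤ_p + ℤ_p·α` of the unramified quadratic extension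
`E = F(α)`, as a set. -/
def OE (p : ℕ) [Fact p.Prime] (E : Type) [Field E] [Algebra ℚ_[p] E] (α : E) : Set E :=
  {x | ∃ a b : ℤ_[p],
    x = algebraMap ℚ_[p] E (a : ℚ_[p]) + algebraMap ℚ_[p] E (b : ℚ_[p]) * α}

/-- The element `x_{a,b} = !![a, b; p·conj b, conj a]` of the quaternion division algebra
`D ⊆ M₂(E)`. -/
def qmat (p : ℕ) [Fact p.Prime] (E : Type) [Field E] [Algebra ℚ_[p] E]
    (conj : E → E) (a b : E) : Matrix (Fin 2) (Fin 2) E :=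
  !![a, b; pE p E * conj b, conj a]

/-- The uniformizer `δ = x_{0,1}` of `D`, with `δ² = p`. -/
def deltaM (p : ℕ) [Fact p.Prime] (E : Type) [Field E] [Algebra ℚ_[p] E] :
    Matrix (Fin 2) (Fin 2) E :=
  !![0, 1; pE p E, 0]

/-- The maximal order `O_D = {x_{a,b} : a, b ∈ O_E}` of `D`, as a set. -/
def ODset (p : ℕ) [Fact p.Prime] (E : Type) [Field E] [Algebra ℚ_[p] E]
    (α : E) (conj : E → E) : Set (Matrix (Fin 2) (Fin 2) E) :=
  {m | ∃ a b : E, a ∈ OE p E α ∧ b ∈ OE p E α ∧ m = qmat p E conj a b}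

/-- The norm-one group `D¹ = {x ∈ D : det x = 1}`, as a set. -/
def D1set (p : ℕ) [Fact p.Prime] (E : Type) [Field E] [Algebra ℚ_[p] E]
    (conj : E → E) : Set (Matrix (Fin 2) (Fin 2) E) :=
  {m | (∃ a b : E, m = qmat p E conj a b) ∧ m.det = 1}

/-- `vDge p E α conj r m` says `v_D(m) ≥ r`, i.e. `m ∈ δ^r·O_D = P_D^r`. -/
def vDge (p : ℕ) [Fact p.Prime] (E : Type) [Field E] [Algebra ℚ_[p] E]
    (α : E) (conj : E → E) (r : ℕ) (m : Matrix (Fin 2) (Fin 2) E) : Prop :=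
  ∃ yy ∈ ODset p E α conj, m = deltaM p E ^ r * yy

/-- `x ∈ P_E = p·O_E`. -/
def inPE (p : ℕ) [Fact p.Prime] (E : Type) [Field E] [Algebra ℚ_[p] E]
    (α : E) (x : E) : Prop :=
  ∃ c ∈ OE p E α, x = pE p E * c

/-- The pure tensor `v ⊗ w ∈ 𝒲 = V ⊗_E W` in coordinates: `(v ⊗ w) i j = v i · conj (w j)`
(the `E`-structure on `W`-coordinates is twisted by conjugation, so that the symplectic
form below is well defined on `𝒲`).  Here `w = (c, d)` stands for `c + d·δ ∈ W = D`. -/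
def tens (E : Type) [Field E] (conj : E → E) (v w : Fin 2 → E) :
    Matrix (Fin 2) (Fin 2) E :=
  Matrix.of fun i j => v i * conj (w j)

/-- The symplectic form `⟨⟨x, y⟩⟩ = Tr_{E/F}(⟨v,v'⟩·conj(⟨w,w'⟩'))` of `𝒲`, written in the
coordinates above, with values `t + conj t` landing in (the image of) `F`. -/
def sympE (p : ℕ) [Fact p.Prime] (E : Type) [Field E] [Algebra ℚ_[p] E]
    (conj : E → E) (x y : Matrix (Fin 2) (Fin 2) E) : E :=
  (x 0 0 * conj (y 1 0) - pE p E * (x 0 1 * conj (y 1 1))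
      - x 1 0 * conj (y 0 0) + pE p E * (x 1 1 * conj (y 0 1)))
    + conj (x 0 0 * conj (y 1 0) - pE p E * (x 0 1 * conj (y 1 1))
      - x 1 0 * conj (y 0 0) + pE p E * (x 1 1 * conj (y 0 1)))

/-- The lattice `A = Γ ⊗ Γ'`: the `O_E`-span (= additive span) of the pure tensors
`v ⊗ w` with `v ∈ Γ = O_E²` and `w ∈ Γ' = O_E + O_E·δ`. -/
def Alat (p : ℕ) [Fact p.Prime] (E : Type) [Field E] [Algebra ℚ_[p] E]
    (α : E) (conj : E → E) : AddSubgroup (Matrix (Fin 2) (Fin 2) E) :=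
  AddSubgroup.closure
    {m | ∃ v w : Fin 2 → E, (∀ i, v i ∈ OE p E α) ∧ (∀ j, w j ∈ OE p E α) ∧
      m = tens E conj v w}

/-- `x` lies in (the image in `E` of) `ℤ_p`. -/
def integralF (p : ℕ) [Fact p.Prime] (E : Type) [Field E] [Algebra ℚ_[p] E]
    (x : E) : Prop :=
  ∃ s : ℤ_[p], x = algebraMap ℚ_[p] E ((s : ℚ_[p]))

/-- The dual lattice `L* = {z ∈ 𝒲 : ⟨⟨z, l⟩⟩ ∈ ℤ_p for all l ∈ L}`. -/
def dualLat (p : ℕ) [Fact p.Prime] (E : Type) [Field E] [Algebra ℚ_[p] E]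
    (α : E) (conj : E → E) (L : Set (Matrix (Fin 2) (Fin 2) E)) :
    Set (Matrix (Fin 2) (Fin 2) E) :=
  {zz | ∀ l ∈ L, integralF p E (sympE p E conj zz l)}

/-- The entrywise embedding `M₂(ℤ_p) → M₂(E)`. -/
def toE (p : ℕ) [Fact p.Prime] (E : Type) [Field E] [Algebra ℚ_[p] E]
    (m : Matrix (Fin 2) (Fin 2) ℤ_[p]) : Matrix (Fin 2) (Fin 2) E :=
  m.map fun t => algebraMap ℚ_[p] E (t : ℚ_[p])

/-- The Cayley transform `c(m) = (1 - m)(1 + m)⁻¹`. -/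
def cay {E : Type} [Field E] (m : Matrix (Fin 2) (Fin 2) E) : Matrix (Fin 2) (Fin 2) E :=
  (1 - m) * (1 + m)⁻¹

/-- The skew-Hermitian form `⟨x, y⟩ = x₁·conj y₂ - x₂·conj y₁` on `V = E²`. -/
def sesqV (E : Type) [Field E] (conj : E → E) (x y : Fin 2 → E) : E :=
  x 0 * conj (y 1) - x 1 * conj (y 0)

/-- `Tr_{E/F}(x) = x + conj x`, as an element of `E`. -/
def trEl (E : Type) [Field E] (conj : E → E) (x : E) : E := x + conj x

namespace S12

variable {p : ℕ} [Fact p.Prime] {E : Type} [Field E] [Algebra ℚ_[p] E] {α : E}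

theorem OE_zero : (0:E) ∈ OE p E α := ⟨0, 0, by simp⟩
theorem OE_one : (1:E) ∈ OE p E α := ⟨1, 0, by simp⟩
theorem OE_alpha : α ∈ OE p E α := ⟨0, 1, by simp⟩
theorem OE_add {x y : E} : x ∈ OE p E α → y ∈ OE p E α → x + y ∈ OE p E α := by
  rintro ⟨a,b,rfl⟩ ⟨c,d,rfl⟩
  exact ⟨a+c, b+d, by push_cast [map_add]; ring⟩
theorem OE_neg {x : E} : x ∈ OE p E α → -x ∈ OE p E α := by
  rintro ⟨a,b,rfl⟩
  exact ⟨-a, -b, by push_cast [map_neg]; ring⟩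
theorem OE_pE : pE p E ∈ OE p E α := ⟨(p:ℤ_[p]), 0, by push_cast [pE]; simp⟩
theorem OE_mul (z : ℤ_[p]ˣ)
    (hα : α * α = algebraMap ℚ_[p] E ((z : ℤ_[p]) : ℚ_[p])) {x y : E} :
    x ∈ OE p E α → y ∈ OE p E α → x * y ∈ OE p E α := by
  rintro ⟨a,b,rfl⟩ ⟨c,d,rfl⟩
  refine ⟨a*c + b*d*(z:ℤ_[p]), a*d + b*c, ?_⟩
  push_cast [map_add, _root_.map_mul]
  linear_combination (algebraMap ℚ_[p] E (b:ℚ_[p]) * algebraMap ℚ_[p] E (d:ℚ_[p])) * hα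

theorem conj_OE (conj : E →ₐ[ℚ_[p]] E) (hconj : conj α = -α) {x : E}
    (hx : x ∈ OE p E α) : conj x ∈ OE p E α := by
  obtain ⟨a,b,rfl⟩ := hx
  refine ⟨a, -b, ?_⟩
  push_cast [map_neg]
  rw [map_add, _root_.map_mul, conj.commutes, conj.commutes, hconj]
  ring

theorem rep_unique (hα0 : α ∉ Set.range (algebraMap ℚ_[p] E)) {a b a' b' : ℚ_[p]}
    (h : algebraMap ℚ_[p] E a + algebraMap ℚ_[p] E b * α
       = algebraMap ℚ_[p] E a' + algebraMap ℚ_[p] E b' * α) : a = a' ∧ b = b' := by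
  have hinj : Function.Injective (algebraMap ℚ_[p] E) := (algebraMap ℚ_[p] E).injective
  by_cases hb : b = b'
  · subst hb
    refine ⟨hinj ?_, rfl⟩
    have := add_right_cancel h
    exact this
  · exfalso
    apply hα0
    refine ⟨(a' - a)/(b - b'), ?_⟩
    have h2 : algebraMap ℚ_[p] E (b - b') * α = algebraMap ℚ_[p] E (a' - a) := by
      rw [map_sub, map_sub]; linear_combination h
    rw [map_div₀, h2.symm]
    rw [mul_comm, mul_div_assoc, div_self, mul_one]
    intro hc
    apply hb
    apply hinj
    rw [map_sub] at hc
    exact sub_eq_zero.mp hc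


variable {p : ℕ} [Fact p.Prime] {E : Type} [Field E] [Algebra ℚ_[p] E] {α : E}

theorem norm_two_eq_one (hp : p ≠ 2) : ‖(2 : ℚ_[p])‖ = 1 := by
  have hpp : p.Prime := Fact.out
  have h1 : ‖((2:ℤ) : ℚ_[p])‖ ≤ 1 := Padic.norm_int_le_one 2
  have h2 : ¬ ‖((2:ℤ) : ℚ_[p])‖ < 1 := by
    rw [Padic.norm_intCast_lt_one_iff]
    intro hd
    have : p ∣ 2 := by exact_mod_cast hd
    exact hp ((Nat.prime_dvd_prime_iff_eq hpp Nat.prime_two).mp this)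
  have : ‖((2:ℤ) : ℚ_[p])‖ = 1 := le_antisymm h1 (not_lt.mp h2)
  simpa using this

theorem norm_z_eq_one (z : ℤ_[p]ˣ) : ‖(((z : ℤ_[p]) : ℚ_[p]))‖ = 1 := by
  rw [PadicInt.padic_norm_e_of_padicInt]
  exact PadicInt.norm_units z

/-- key duality fact: trace conditions force membership in `OE`. -/
theorem mem_OE_of_traces (hp : p ≠ 2) (z : ℤ_[p]ˣ)
    (hα : α * α = algebraMap ℚ_[p] E ((z : ℤ_[p]) : ℚ_[p]))
    (hα0 : α ∉ Set.range (algebraMap ℚ_[p] E))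
    (hspan : ∀ x : E, ∃ a b : ℚ_[p], x = algebraMap ℚ_[p] E a + algebraMap ℚ_[p] E b * α)
    (conj : E →ₐ[ℚ_[p]] E) (hconj : conj α = -α) (x : E)
    (h1 : ∃ s : ℤ_[p], x + conj x = algebraMap ℚ_[p] E (s : ℚ_[p]))
    (h2 : ∃ s : ℤ_[p], x * α + conj (x * α) = algebraMap ℚ_[p] E (s : ℚ_[p])) :
    x ∈ OE p E α := by
  obtain ⟨a, b, rfl⟩ := hspan x
  obtain ⟨s1, hs1⟩ := h1
  obtain ⟨s2, hs2⟩ := h2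
  have hinj : Function.Injective (algebraMap ℚ_[p] E) := (algebraMap ℚ_[p] E).injective
  set φ := algebraMap ℚ_[p] E
  have hcx : conj (φ a + φ b * α) = φ a - φ b * α := by
    rw [map_add, _root_.map_mul, conj.commutes, conj.commutes, hconj]; ring
  have e1 : 2 * a = (s1 : ℚ_[p]) := by
    apply hinj
    rw [_root_.map_mul, map_ofNat, ← hs1, hcx]; ring
  have e2 : 2 * (b * ((z : ℤ_[p]) : ℚ_[p])) = (s2 : ℚ_[p]) := by
    apply hinj
    rw [_root_.map_mul, map_ofNat, _root_.map_mul, ← hs2, _root_.map_mul, hcx, hconj]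
    linear_combination (-2 * φ b) * hα
  have hna : ‖a‖ ≤ 1 := by
    have : ‖(2:ℚ_[p])‖ * ‖a‖ = ‖(s1:ℚ_[p])‖ := by rw [← norm_mul, e1]
    rw [norm_two_eq_one hp, one_mul] at this
    rw [this, ← PadicInt.norm_def]; exact PadicInt.norm_le_one s1
  have hnb : ‖b‖ ≤ 1 := by
    have : ‖(2:ℚ_[p])‖ * (‖b‖ * ‖(((z : ℤ_[p]) : ℚ_[p]))‖) = ‖(s2:ℚ_[p])‖ := by
      rw [← norm_mul, ← norm_mul, e2]
    rw [norm_two_eq_one hp, one_mul, norm_z_eq_one, mul_one] at this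
    rw [this, ← PadicInt.norm_def]; exact PadicInt.norm_le_one s2
  exact ⟨⟨a, hna⟩, ⟨b, hnb⟩, rfl⟩

theorem trEl_integral (conj : E →ₐ[ℚ_[p]] E) (hconj : conj α = -α) {x : E}
    (hx : x ∈ OE p E α) : ∃ s : ℤ_[p], x + conj x = algebraMap ℚ_[p] E (s : ℚ_[p]) := by
  obtain ⟨a, b, rfl⟩ := hx
  refine ⟨a + a, ?_⟩
  have hcx : conj (algebraMap ℚ_[p] E (a:ℚ_[p]) + algebraMap ℚ_[p] E (b:ℚ_[p]) * α)
      = algebraMap ℚ_[p] E (a:ℚ_[p]) - algebraMap ℚ_[p] E (b:ℚ_[p]) * α := by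
    rw [map_add, _root_.map_mul, conj.commutes, conj.commutes, hconj]; ring
  rw [hcx]
  push_cast [map_add]
  ring


def MOE (p : ℕ) [Fact p.Prime] (E : Type) [Field E] [Algebra ℚ_[p] E] (α : E) :
    AddSubgroup (Matrix (Fin 2) (Fin 2) E) where
  carrier := {m | ∀ i j, m i j ∈ OE p E α}
  zero_mem' := fun _ _ => OE_zero
  add_mem' := fun hx hy i j => by
    rw [Matrix.add_apply]; exact OE_add (hx i j) (hy i j)
  neg_mem' := fun hx i j => by
    rw [Matrix.neg_apply]; exact OE_neg (hx i j)

def SL (p : ℕ) [Fact p.Prime] (E : Type) [Field E] [Algebra ℚ_[p] E] (α : E) :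
    AddSubgroup (Matrix (Fin 2) (Fin 2) E) where
  carrier := {m | (∀ i, m i 0 ∈ OE p E α) ∧ ∀ i, ∃ c ∈ OE p E α, m i 1 = (pE p E)⁻¹ * c}
  zero_mem' := ⟨fun _ => OE_zero, fun _ => ⟨0, OE_zero, by simp⟩⟩
  add_mem' := by
    rintro x y ⟨hx0, hx1⟩ ⟨hy0, hy1⟩
    refine ⟨fun i => by rw [Matrix.add_apply]; exact OE_add (hx0 i) (hy0 i), fun i => ?_⟩
    obtain ⟨c, hc, hcx⟩ := hx1 i
    obtain ⟨d, hd, hdy⟩ := hy1 i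
    exact ⟨c + d, OE_add hc hd, by rw [Matrix.add_apply, hcx, hdy, mul_add]⟩
  neg_mem' := by
    rintro x ⟨hx0, hx1⟩
    refine ⟨fun i => by rw [Matrix.neg_apply]; exact OE_neg (hx0 i), fun i => ?_⟩
    obtain ⟨c, hc, hcx⟩ := hx1 i
    exact ⟨-c, OE_neg hc, by rw [Matrix.neg_apply, hcx, mul_neg]⟩

/-- The generating set of `A* = Γ ⊗ (O_E + P_E⁻¹·δ)`. -/
def genB (p : ℕ) [Fact p.Prime] (E : Type) [Field E] [Algebra ℚ_[p] E] (α : E)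
    (conj : E → E) : Set (Matrix (Fin 2) (Fin 2) E) :=
  {m | ∃ v w : Fin 2 → E, (∀ i, v i ∈ OE p E α) ∧
    (∃ c ∈ OE p E α, ∃ d ∈ OE p E α, w = ![c, (pE p E)⁻¹ * d]) ∧
    m = tens E conj v w}

theorem matrix_decomp (m : Matrix (Fin 2) (Fin 2) E) :
    m = Matrix.single 0 0 (m 0 0) + Matrix.single 0 1 (m 0 1)
      + Matrix.single 1 0 (m 1 0) + Matrix.single 1 1 (m 1 1) := by
  ext i j
  fin_cases i <;> fin_cases j <;>
    simp [Matrix.add_apply, Matrix.single, Matrix.of_apply]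

theorem tens_single (conj : E →ₐ[ℚ_[p]] E) (i j : Fin 2) (a : E) :
    tens E ⇑conj (Pi.single i a) (Pi.single j 1) = Matrix.single i j a := by
  ext k l
  simp only [tens, Matrix.of_apply, Matrix.single, Pi.single_apply]
  by_cases hk : i = k <;> by_cases hl : j = l <;>
    simp [hk, hl, eq_comm, _root_.map_one, _root_.map_zero]

theorem single_mem_OE {a : E} (ha : a ∈ OE p E α) (i : Fin 2) :
    ∀ k, (Pi.single i a : Fin 2 → E) k ∈ OE p E α := by
  intro k
  rcases eq_or_ne i k with h | h
  · subst h; simpa using ha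
  · rw [Pi.single_apply, if_neg (by exact fun hc => h hc.symm)]
    exact OE_zero

theorem Alat_eq (z : ℤ_[p]ˣ)
    (hα : α * α = algebraMap ℚ_[p] E ((z : ℤ_[p]) : ℚ_[p]))
    (conj : E →ₐ[ℚ_[p]] E) (hconj : conj α = -α) :
    (Alat p E α ⇑conj : Set (Matrix (Fin 2) (Fin 2) E)) = {m | ∀ i j, m i j ∈ OE p E α} := by
  apply subset_antisymm
  · have : Alat p E α ⇑conj ≤ MOE p E α := by
      rw [Alat, AddSubgroup.closure_le]
      rintro m ⟨v, w, hv, hw, rfl⟩ i j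
      exact OE_mul z hα (hv i) (conj_OE conj hconj (hw j))
    exact this
  · intro m hm
    have hgen : ∀ (i j : Fin 2), Matrix.single i j (m i j) ∈ Alat p E α ⇑conj := by
      intro i j
      apply AddSubgroup.subset_closure
      exact ⟨Pi.single i (m i j), Pi.single j 1, single_mem_OE (hm i j) i,
        single_mem_OE OE_one j, (tens_single conj i j (m i j)).symm⟩
    rw [SetLike.mem_coe, matrix_decomp m]
    exact add_mem (add_mem (add_mem (hgen 0 0) (hgen 0 1)) (hgen 1 0)) (hgen 1 1)

theorem pE_ne_zero : pE p E ≠ (0 : E) := by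
  have hpp : p.Prime := Fact.out
  simp only [pE, ne_eq, map_eq_zero]
  exact_mod_cast hpp.ne_zero

theorem conj_pE_inv (conj : E →ₐ[ℚ_[p]] E) : conj (pE p E)⁻¹ = (pE p E)⁻¹ := by
  rw [map_inv₀, pE, conj.commutes]

theorem Blat_eq (z : ℤ_[p]ˣ)
    (hα : α * α = algebraMap ℚ_[p] E ((z : ℤ_[p]) : ℚ_[p]))
    (conj : E →ₐ[ℚ_[p]] E) (hconj : conj α = -α) :
    ((AddSubgroup.closure (genB p E α ⇑conj) : AddSubgroup (Matrix (Fin 2) (Fin 2) E)) :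
      Set (Matrix (Fin 2) (Fin 2) E)) = (SL p E α : Set (Matrix (Fin 2) (Fin 2) E)) := by
  apply subset_antisymm
  · have : AddSubgroup.closure (genB p E α ⇑conj) ≤ SL p E α := by
      rw [AddSubgroup.closure_le]
      rintro m ⟨v, w, hv, ⟨c, hc, d, hd, rfl⟩, rfl⟩
      constructor
      · intro i
        show v i * conj (![c, (pE p E)⁻¹ * d] 0) ∈ OE p E α
        simp only [Matrix.cons_val_zero]
        exact OE_mul z hα (hv i) (conj_OE conj hconj hc)
      · intro i
        refine ⟨v i * conj d, OE_mul z hα (hv i) (conj_OE conj hconj hd), ?_⟩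
        show v i * conj (![c, (pE p E)⁻¹ * d] 1) = _
        simp only [Matrix.cons_val_one, Matrix.head_cons, Matrix.cons_val_zero]
        rw [_root_.map_mul, conj_pE_inv conj]
        ring
    exact this
  · rintro m ⟨hm0, hm1⟩
    have hgen0 : ∀ i : Fin 2, ∀ a ∈ OE p E α, Matrix.single i 0 a ∈
        AddSubgroup.closure (genB p E α ⇑conj) := by
      intro i a ha
      apply AddSubgroup.subset_closure
      refine ⟨Pi.single i a, ![1, (pE p E)⁻¹ * 0], single_mem_OE ha i,
        ⟨1, OE_one, 0, OE_zero, rfl⟩, ?_⟩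
      have hw : ![(1:E), (pE p E)⁻¹ * 0] = Pi.single (0 : Fin 2) 1 := by
        ext k; fin_cases k <;> simp
      rw [hw, tens_single conj]
    have hgen1 : ∀ i : Fin 2, ∀ c ∈ OE p E α, Matrix.single i 1 ((pE p E)⁻¹ * c) ∈
        AddSubgroup.closure (genB p E α ⇑conj) := by
      intro i c hc
      apply AddSubgroup.subset_closure
      refine ⟨Pi.single i c, ![0, (pE p E)⁻¹ * 1], single_mem_OE hc i,
        ⟨0, OE_zero, 1, OE_one, rfl⟩, ?_⟩
      ext k l
      simp only [tens, Matrix.of_apply, Pi.single_apply]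
      rcases eq_or_ne i k with hk | hk
      · subst hk
        rw [if_pos rfl]
        fin_cases l
        · show Matrix.single i 1 ((pE p E)⁻¹ * c) i 0 = c * conj 0
          rw [map_zero, mul_zero,
            Matrix.single_apply_of_col_ne i i (by decide) _]
        · show Matrix.single i 1 ((pE p E)⁻¹ * c) i 1 = c * conj ((pE p E)⁻¹ * 1)
          rw [Matrix.single_apply_same, mul_one, conj_pE_inv conj]
          ring
      · rw [if_neg (by exact fun hc' => hk hc'.symm), zero_mul,
          Matrix.single_apply_of_row_ne hk]
    have h1 : Matrix.single 0 1 (m 0 1) ∈ AddSubgroup.closure (genB p E α ⇑conj) := by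
      obtain ⟨c, hc, hcm⟩ := hm1 0
      rw [hcm]; exact hgen1 0 c hc
    have h1' : Matrix.single 1 1 (m 1 1) ∈ AddSubgroup.closure (genB p E α ⇑conj) := by
      obtain ⟨c, hc, hcm⟩ := hm1 1
      rw [hcm]; exact hgen1 1 c hc
    rw [SetLike.mem_coe, matrix_decomp m]
    exact add_mem (add_mem (add_mem (hgen0 0 _ (hm0 0)) h1) (hgen0 1 _ (hm0 1))) h1'

theorem OE_sub {x y : E} (hx : x ∈ OE p E α) (hy : y ∈ OE p E α) :
    x - y ∈ OE p E α := by
  rw [sub_eq_add_neg]; exact OE_add hx (OE_neg hy)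

theorem std_mem_Alat (z : ℤ_[p]ˣ)
    (hα : α * α = algebraMap ℚ_[p] E ((z : ℤ_[p]) : ℚ_[p]))
    (conj : E →ₐ[ℚ_[p]] E) (hconj : conj α = -α) {u : E} (hu : u ∈ OE p E α)
    (i j : Fin 2) :
    Matrix.single i j u ∈ (Alat p E α ⇑conj : Set (Matrix (Fin 2) (Fin 2) E)) := by
  rw [Alat_eq z hα conj hconj]
  intro k l
  by_cases h : i = k ∧ j = l
  · obtain ⟨rfl, rfl⟩ := h
    rw [Matrix.single_apply_same]; exact hu
  · rw [Matrix.single_apply_of_ne _ _ _ _ _ h]; exact OE_zero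

theorem sympE_st10 (conj : E →ₐ[ℚ_[p]] E) (zz : Matrix (Fin 2) (Fin 2) E) (u : E) :
    sympE p E ⇑conj zz (Matrix.single 1 0 u)
      = zz 0 0 * conj u + conj (zz 0 0 * conj u) := by
  have h10 : Matrix.single (1:Fin 2) (0:Fin 2) u 1 0 = u :=
    Matrix.single_apply_same 1 0 u
  have h11 : Matrix.single (1:Fin 2) (0:Fin 2) u 1 1 = 0 :=
    Matrix.single_apply_of_ne _ _ _ _ _ (by decide)
  have h00 : Matrix.single (1:Fin 2) (0:Fin 2) u 0 0 = 0 :=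
    Matrix.single_apply_of_ne _ _ _ _ _ (by decide)
  have h01 : Matrix.single (1:Fin 2) (0:Fin 2) u 0 1 = 0 :=
    Matrix.single_apply_of_ne _ _ _ _ _ (by decide)
  simp only [sympE, h10, h11, h00, h01, _root_.map_zero, mul_zero, sub_zero, add_zero]

theorem sympE_st00 (conj : E →ₐ[ℚ_[p]] E) (zz : Matrix (Fin 2) (Fin 2) E) (u : E) :
    sympE p E ⇑conj zz (Matrix.single 0 0 u)
      = -(zz 1 0 * conj u) + conj (-(zz 1 0 * conj u)) := by
  have h00 : Matrix.single (0:Fin 2) (0:Fin 2) u 0 0 = u :=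
    Matrix.single_apply_same 0 0 u
  have h10 : Matrix.single (0:Fin 2) (0:Fin 2) u 1 0 = 0 :=
    Matrix.single_apply_of_ne _ _ _ _ _ (by decide)
  have h11 : Matrix.single (0:Fin 2) (0:Fin 2) u 1 1 = 0 :=
    Matrix.single_apply_of_ne _ _ _ _ _ (by decide)
  have h01 : Matrix.single (0:Fin 2) (0:Fin 2) u 0 1 = 0 :=
    Matrix.single_apply_of_ne _ _ _ _ _ (by decide)
  simp only [sympE, h10, h11, h00, h01, _root_.map_zero, mul_zero, sub_zero, add_zero,
    zero_sub, sub_self]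

theorem sympE_st11 (conj : E →ₐ[ℚ_[p]] E) (zz : Matrix (Fin 2) (Fin 2) E) (u : E) :
    sympE p E ⇑conj zz (Matrix.single 1 1 u)
      = -(pE p E * (zz 0 1 * conj u)) + conj (-(pE p E * (zz 0 1 * conj u))) := by
  have h11 : Matrix.single (1:Fin 2) (1:Fin 2) u 1 1 = u :=
    Matrix.single_apply_same 1 1 u
  have h10 : Matrix.single (1:Fin 2) (1:Fin 2) u 1 0 = 0 :=
    Matrix.single_apply_of_ne _ _ _ _ _ (by decide)
  have h00 : Matrix.single (1:Fin 2) (1:Fin 2) u 0 0 = 0 :=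
    Matrix.single_apply_of_ne _ _ _ _ _ (by decide)
  have h01 : Matrix.single (1:Fin 2) (1:Fin 2) u 0 1 = 0 :=
    Matrix.single_apply_of_ne _ _ _ _ _ (by decide)
  simp only [sympE, h10, h11, h00, h01, _root_.map_zero, mul_zero, sub_zero, add_zero,
    zero_sub, sub_self]

theorem sympE_st01 (conj : E →ₐ[ℚ_[p]] E) (zz : Matrix (Fin 2) (Fin 2) E) (u : E) :
    sympE p E ⇑conj zz (Matrix.single 0 1 u)
      = pE p E * (zz 1 1 * conj u) + conj (pE p E * (zz 1 1 * conj u)) := by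
  have h01 : Matrix.single (0:Fin 2) (1:Fin 2) u 0 1 = u :=
    Matrix.single_apply_same 0 1 u
  have h10 : Matrix.single (0:Fin 2) (1:Fin 2) u 1 0 = 0 :=
    Matrix.single_apply_of_ne _ _ _ _ _ (by decide)
  have h00 : Matrix.single (0:Fin 2) (1:Fin 2) u 0 0 = 0 :=
    Matrix.single_apply_of_ne _ _ _ _ _ (by decide)
  have h11 : Matrix.single (0:Fin 2) (1:Fin 2) u 1 1 = 0 :=
    Matrix.single_apply_of_ne _ _ _ _ _ (by decide)
  simp only [sympE, h10, h11, h00, h01, _root_.map_zero, mul_zero, sub_zero, add_zero,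
    zero_sub, sub_self, zero_add]

theorem conj_neg_one (conj : E →ₐ[ℚ_[p]] E) : conj (-1 : E) = -1 := by
  rw [map_neg, _root_.map_one]

theorem dual_eq (hp : p ≠ 2) (z : ℤ_[p]ˣ)
    (hα : α * α = algebraMap ℚ_[p] E ((z : ℤ_[p]) : ℚ_[p]))
    (hα0 : α ∉ Set.range (algebraMap ℚ_[p] E))
    (hspan : ∀ x : E, ∃ a b : ℚ_[p],
      x = algebraMap ℚ_[p] E a + algebraMap ℚ_[p] E b * α)
    (conj : E →ₐ[ℚ_[p]] E) (hconj : conj α = -α) :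
    dualLat p E α ⇑conj (Alat p E α ⇑conj)
      = (SL p E α : Set (Matrix (Fin 2) (Fin 2) E)) := by
  have hmem_negone : (-1 : E) ∈ OE p E α := OE_neg OE_one
  have hmem_negα : (-α : E) ∈ OE p E α := OE_neg OE_alpha
  ext zz
  constructor
  · intro hzz
    have key : ∀ (i j : Fin 2), ∀ u ∈ OE p E α,
        ∃ s : ℤ_[p], sympE p E ⇑conj zz (Matrix.single i j u)
          = algebraMap ℚ_[p] E (s : ℚ_[p]) :=
      fun i j u hu => hzz _ (std_mem_Alat z hα conj hconj hu i j)
    -- zz 0 0 ∈ OE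
    have hz00 : zz 0 0 ∈ OE p E α := by
      apply mem_OE_of_traces hp z hα hα0 hspan conj hconj
      · obtain ⟨s, hs⟩ := key 1 0 1 OE_one
        rw [sympE_st10, _root_.map_one, mul_one] at hs
        exact ⟨s, hs⟩
      · obtain ⟨s, hs⟩ := key 1 0 (-α) hmem_negα
        rw [sympE_st10, show conj (-α) = α from by rw [map_neg, hconj, neg_neg]] at hs
        exact ⟨s, hs⟩
    have hz10 : zz 1 0 ∈ OE p E α := by
      apply mem_OE_of_traces hp z hα hα0 hspan conj hconj
      · obtain ⟨s, hs⟩ := key 0 0 (-1) hmem_negone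
        rw [sympE_st00, conj_neg_one conj,
          show -(zz 1 0 * (-1 : E)) = zz 1 0 from by ring] at hs
        exact ⟨s, hs⟩
      · obtain ⟨s, hs⟩ := key 0 0 α OE_alpha
        rw [sympE_st00, hconj,
          show -(zz 1 0 * (-α : E)) = zz 1 0 * α from by ring] at hs
        exact ⟨s, hs⟩
    have hz01 : pE p E * zz 0 1 ∈ OE p E α := by
      apply mem_OE_of_traces hp z hα hα0 hspan conj hconj
      · obtain ⟨s, hs⟩ := key 1 1 (-1) hmem_negone
        rw [sympE_st11, conj_neg_one conj,
          show -(pE p E * (zz 0 1 * (-1 : E))) = pE p E * zz 0 1 from by ring] at hs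
        exact ⟨s, hs⟩
      · obtain ⟨s, hs⟩ := key 1 1 α OE_alpha
        rw [sympE_st11, hconj,
          show -(pE p E * (zz 0 1 * (-α : E))) = pE p E * zz 0 1 * α from by ring] at hs
        exact ⟨s, hs⟩
    have hz11 : pE p E * zz 1 1 ∈ OE p E α := by
      apply mem_OE_of_traces hp z hα hα0 hspan conj hconj
      · obtain ⟨s, hs⟩ := key 0 1 1 OE_one
        rw [sympE_st01, _root_.map_one,
          show pE p E * (zz 1 1 * (1 : E)) = pE p E * zz 1 1 from by ring] at hs
        exact ⟨s, hs⟩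
      · obtain ⟨s, hs⟩ := key 0 1 (-α) hmem_negα
        rw [sympE_st01, show conj (-α) = α from by rw [map_neg, hconj, neg_neg],
          show pE p E * (zz 1 1 * α) = pE p E * zz 1 1 * α from by ring] at hs
        exact ⟨s, hs⟩
    refine ⟨fun i => ?_, fun i => ?_⟩
    · fin_cases i
      · exact hz00
      · exact hz10
    · fin_cases i
      · exact ⟨pE p E * zz 0 1, hz01, (inv_mul_cancel_left₀ pE_ne_zero _).symm⟩
      · exact ⟨pE p E * zz 1 1, hz11, (inv_mul_cancel_left₀ pE_ne_zero _).symm⟩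
  · rintro ⟨hz0, hz1⟩ l hl
    rw [Alat_eq z hα conj hconj] at hl
    obtain ⟨c1, hc1, hc1e⟩ := hz1 0
    obtain ⟨c2, hc2, hc2e⟩ := hz1 1
    have e1 : pE p E * (zz 0 1 * conj (l 1 1)) = c1 * conj (l 1 1) := by
      rw [hc1e, ← mul_assoc, ← mul_assoc, mul_inv_cancel₀ pE_ne_zero, one_mul]
    have e2 : pE p E * (zz 1 1 * conj (l 0 1)) = c2 * conj (l 0 1) := by
      rw [hc2e, ← mul_assoc, ← mul_assoc, mul_inv_cancel₀ pE_ne_zero, one_mul]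
    have hT : (zz 0 0 * conj (l 1 0) - pE p E * (zz 0 1 * conj (l 1 1))
        - zz 1 0 * conj (l 0 0) + pE p E * (zz 1 1 * conj (l 0 1))) ∈ OE p E α := by
      rw [e1, e2]
      exact OE_add
        (OE_sub
          (OE_sub (OE_mul z hα (hz0 0) (conj_OE conj hconj (hl 1 0)))
            (OE_mul z hα hc1 (conj_OE conj hconj (hl 1 1))))
          (OE_mul z hα (hz0 1) (conj_OE conj hconj (hl 0 0))))
        (OE_mul z hα hc2 (conj_OE conj hconj (hl 0 1)))
    exact trEl_integral conj hconj hT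

theorem pE_inv_not_mem (hα0 : α ∉ Set.range (algebraMap ℚ_[p] E)) :
    (pE p E)⁻¹ ∉ OE p E α := by
  rintro ⟨a, b, hab⟩
  have h1 : algebraMap ℚ_[p] E 1 + algebraMap ℚ_[p] E 0 * α
      = algebraMap ℚ_[p] E ((p : ℚ_[p]) * (a : ℚ_[p]))
        + algebraMap ℚ_[p] E ((p : ℚ_[p]) * (b : ℚ_[p])) * α := by
    rw [_root_.map_mul, _root_.map_mul, _root_.map_one, _root_.map_zero]
    have hcancel : pE p E * (pE p E)⁻¹ = 1 := mul_inv_cancel₀ pE_ne_zero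
    rw [hab] at hcancel
    rw [← hcancel]
    unfold pE
    ring
  obtain ⟨h1a, h1b⟩ := rep_unique hα0 h1
  have hnorm : (1 : ℝ) = ‖(p : ℚ_[p])‖ * ‖(a : ℚ_[p])‖ := by
    rw [← norm_mul, ← h1a, norm_one]
  rw [Padic.norm_p] at hnorm
  have hpl : (1 : ℝ) < p := by exact_mod_cast (Fact.out : p.Prime).one_lt
  have hp0 : (0 : ℝ) < p := by linarith
  have ha1 : ‖(a : ℚ_[p])‖ ≤ 1 := by
    rw [← PadicInt.norm_def]; exact PadicInt.norm_le_one a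
  have hple : (p : ℝ) = ‖(a : ℚ_[p])‖ := by
    field_simp at hnorm
    rw [PadicInt.padic_norm_e_of_padicInt]
    linarith [hnorm]
  linarith

end S12

/-- the dual lattice of `A = Γ ⊗ Γ'` with respect to `⟨⟨·,·⟩⟩` is
`A* = Γ ⊗ (O_E + P_E⁻¹·δ)`, the `O_E`-span of the `v ⊗ (c + p⁻¹·d·δ)` with `v ∈ Γ`,
`c, d ∈ O_E`; moreover `A` is a non-self-dual "good" lattice: `p·A* ⊆ A ⊊ A*`. -/
theorem stmt12 (p : ℕ) [Fact p.Prime] (hp : p ≠ 2)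
    (z : ℤ_[p]ˣ) (hz : ¬ ∃ w : ℤ_[p], w * w = (z : ℤ_[p]))
    (E : Type) [Field E] [Algebra ℚ_[p] E] (α : E)
    (hα : α * α = algebraMap ℚ_[p] E ((z : ℤ_[p]) : ℚ_[p]))
    (hα0 : α ∉ Set.range (algebraMap ℚ_[p] E))
    (hspan : ∀ x : E, ∃ a b : ℚ_[p], x = algebraMap ℚ_[p] E a + algebraMap ℚ_[p] E b * α)
    (conj : E →ₐ[ℚ_[p]] E) (hconj : conj α = -α) :
    dualLat p E α conj (Alat p E α conj)
      = (AddSubgroup.closure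
          {m | ∃ v w : Fin 2 → E, (∀ i, v i ∈ OE p E α) ∧
            (∃ c ∈ OE p E α, ∃ d ∈ OE p E α, w = ![c, (pE p E)⁻¹ * d]) ∧
            m = tens E conj v w} : Set (Matrix (Fin 2) (Fin 2) E)) ∧
    (∀ zz ∈ dualLat p E α conj (Alat p E α conj), pE p E • zz ∈ Alat p E α conj) ∧
    (Alat p E α conj : Set (Matrix (Fin 2) (Fin 2) E))
      ⊆ dualLat p E α conj (Alat p E α conj) ∧
    (Alat p E α conj : Set (Matrix (Fin 2) (Fin 2) E))
      ≠ dualLat p E α conj (Alat p E α conj) := by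
  refine ⟨?_, ?_, ?_, ?_⟩
  · rw [S12.dual_eq hp z hα hα0 hspan conj hconj]
    exact (S12.Blat_eq z hα conj hconj).symm
  · intro zz hzz
    rw [S12.dual_eq hp z hα hα0 hspan conj hconj] at hzz
    obtain ⟨h0, h1⟩ := hzz
    rw [← SetLike.mem_coe, S12.Alat_eq z hα conj hconj]
    intro i j
    rw [Matrix.smul_apply, smul_eq_mul]
    fin_cases j
    · show pE p E * zz i 0 ∈ OE p E α
      exact S12.OE_mul z hα S12.OE_pE (h0 i)
    · show pE p E * zz i 1 ∈ OE p E α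
      obtain ⟨c, hc, he⟩ := h1 i
      rw [he, mul_inv_cancel_left₀ S12.pE_ne_zero]
      exact hc
  · intro m hm
    have hm' : ∀ i j, m i j ∈ OE p E α := by
      rw [S12.Alat_eq z hα conj hconj] at hm; exact hm
    rw [S12.dual_eq hp z hα hα0 hspan conj hconj]
    exact ⟨fun i => hm' i 0, fun i =>
      ⟨pE p E * m i 1, S12.OE_mul z hα S12.OE_pE (hm' i 1),
        (inv_mul_cancel_left₀ S12.pE_ne_zero _).symm⟩⟩
  · intro heq
    have hM : Matrix.single 0 1 ((pE p E)⁻¹)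
        ∈ dualLat p E α ⇑conj ↑(Alat p E α ⇑conj) := by
      rw [S12.dual_eq hp z hα hα0 hspan conj hconj]
      refine ⟨fun i => ?_, fun i => ?_⟩
      · rw [Matrix.single_apply_of_ne _ _ _ _ _
          (by simp : ¬((0:Fin 2) = i ∧ (1:Fin 2) = 0))]
        exact S12.OE_zero
      · fin_cases i
        · refine ⟨1, S12.OE_one, ?_⟩
          show Matrix.single (0:Fin 2) 1 ((pE p E)⁻¹) 0 1 = (pE p E)⁻¹ * 1
          rw [Matrix.single_apply_same, mul_one]
        · refine ⟨0, S12.OE_zero, ?_⟩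
          show Matrix.single (0:Fin 2) 1 ((pE p E)⁻¹) 1 1 = (pE p E)⁻¹ * 0
          rw [Matrix.single_apply_of_row_ne (by decide), mul_zero]
    rw [← heq] at hM
    have hmem : (Matrix.single 0 1 ((pE p E)⁻¹) : Matrix (Fin 2) (Fin 2) E) 0 1
        ∈ OE p E α := by
      rw [S12.Alat_eq z hα conj hconj] at hM
      exact hM 0 1
    rw [Matrix.single_apply_same] at hmem
    exact S12.pE_inv_not_mem hα0 hmem
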